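/- Let G be a group acting by measurable automorphisms on a measurable space X. Then the following are equivalent: (1) there exists a G-invariant mean on B(X); (2) for every countable partition 𝒫 of X into measurable sets, every finite subset E ⊆ G, and every ε > 0, there exists a finitely supported function a : X → ℝ with a ≥ 0 and ‖a‖₁ = 1 such that ‖a − g·a‖_𝒫 ≤ ε for all g ∈ E. -/

import Mathlib

open scoped Pointwise

/-- A countable partition of a measurable space into measurable sets. -/
def IsCtblMeasPartition {X : Type*} [MeasurableSpace X] (Ps : Set (Set X)) : Prop :=
  Ps.Countable ∧ (∀ P ∈ Ps, MeasurableSet P) ∧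
  Ps.PairwiseDisjoint id ∧ ⋃₀ Ps = Set.univ

/-- The seminorm `‖a‖_Ps = Σ_{P ∈ Ps} |Σ_{x ∈ P} a x|` on finitely supported functions. -/
noncomputable def pnorm {X : Type*} (Ps : Set (Set X)) (a : X →₀ ℝ) : ℝ :=
  ∑' P : Ps, |∑ x ∈ a.support, (P : Set X).indicator (fun y => a y) x|

/-- A mean on the space of real-valued functions satisfying predicate `P`. -/
def IsMean {X : Type*} (P : (X → ℝ) → Prop) (μ : (X → ℝ) → ℝ) : Prop :=
  μ (fun _ => (1 : ℝ)) = 1 ∧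
  (∀ f, P f → (∀ x, 0 ≤ f x) → 0 ≤ μ f) ∧
  (∀ f g, P f → P g → μ (fun x => f x + g x) = μ f + μ g) ∧
  (∀ (c : ℝ) (f), P f → μ (fun x => c * f x) = c * μ f)

/-- `f` is bounded and measurable (an element of `B(X)`). -/
def IsBddMeas {X : Type*} [MeasurableSpace X] (f : X → ℝ) : Prop :=
  (∃ C, ∀ x, |f x| ≤ C) ∧ Measurable f

/-- `f` is bounded (an element of `ℓ∞(X)`). -/
def IsBdd {X : Type*} (f : X → ℝ) : Prop := ∃ C, ∀ x, |f x| ≤ C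

/-- The `ℓ¹`-norm of a finitely supported function. -/
def onenorm {X : Type*} (a : X →₀ ℝ) : ℝ := ∑ x ∈ a.support, |a x|

/-- The action of a group element on finitely supported functions:
`(g • a)(x) = a (g⁻¹ • x)`. -/
def fsAct {G X : Type*} [Group G] [MulAction G X] (g : G) (a : X →₀ ℝ) : X →₀ ℝ :=
  Finsupp.equivMapDomain (MulAction.toPerm g) a


open scoped ENNReal NNReal

namespace InvMean

open Finsupp

variable {X Y G : Type*} {ι : Type*}

lemma onenorm_nonneg (a : X →₀ ℝ) : 0 ≤ onenorm a :=
  Finset.sum_nonneg fun _ _ => abs_nonneg _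

lemma onenorm_eq_sum_subset {a : X →₀ ℝ} {s : Finset X} (h : a.support ⊆ s) :
    onenorm a = ∑ x ∈ s, |a x| := by
  refine Finset.sum_subset h fun x _ hx => ?_
  rw [notMem_support_iff.1 hx, abs_zero]

lemma onenorm_add_le (a b : X →₀ ℝ) : onenorm (a + b) ≤ onenorm a + onenorm b := by
  classical
  rw [onenorm_eq_sum_subset (s := a.support ∪ b.support) Finsupp.support_add,
    onenorm_eq_sum_subset (s := a.support ∪ b.support) Finset.subset_union_left,
    onenorm_eq_sum_subset (s := a.support ∪ b.support) Finset.subset_union_right,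
    ← Finset.sum_add_distrib]
  exact Finset.sum_le_sum fun x _ => by simpa using abs_add_le (a x) (b x)

lemma onenorm_neg (a : X →₀ ℝ) : onenorm (-a) = onenorm a := by
  unfold onenorm
  rw [Finsupp.support_neg]
  exact Finset.sum_congr rfl fun x _ => by simp

lemma onenorm_single (x : X) (r : ℝ) : onenorm (Finsupp.single x r) = |r| := by
  rcases eq_or_ne r 0 with rfl | hr
  · simp [onenorm]
  · rw [onenorm_eq_sum_subset (s := {x}) Finsupp.support_single_subset]
    simp

lemma onenorm_single_add {x : X} {r : ℝ} {f : X →₀ ℝ} (hx : x ∉ f.support) :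
    onenorm (Finsupp.single x r + f) = |r| + onenorm f := by
  classical
  have hsub : (Finsupp.single x r + f).support ⊆ insert x f.support := by
    refine (Finsupp.support_add).trans ?_
    intro y hy
    rcases Finset.mem_union.1 hy with h | h
    · exact Finset.mem_insert.2 (Or.inl (Finset.mem_singleton.1 (Finsupp.support_single_subset h)))
    · exact Finset.mem_insert_of_mem h
  rw [onenorm_eq_sum_subset hsub, Finset.sum_insert hx]
  have hfx : f x = 0 := notMem_support_iff.1 hx
  congr 1
  · simp [hfx]
  · refine Finset.sum_congr rfl fun y hy => ?_
    have : y ≠ x := fun h => hx (h ▸ hy)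
    simp [Finsupp.single_apply, (Ne.symm this)]

lemma onenorm_mapDomain_le (h : X → Y) (a : X →₀ ℝ) :
    onenorm (Finsupp.mapDomain h a) ≤ onenorm a := by
  induction a using Finsupp.induction with
  | zero => simp [onenorm]
  | single_add x r f hx hr ih =>
      rw [Finsupp.mapDomain_add, Finsupp.mapDomain_single, onenorm_single_add hx]
      calc onenorm (Finsupp.single (h x) r + Finsupp.mapDomain h f)
          ≤ onenorm (Finsupp.single (h x) r) + onenorm (Finsupp.mapDomain h f) :=
            onenorm_add_le _ _
        _ ≤ |r| + onenorm f := by rw [onenorm_single]; linarith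
        _ = _ := rfl

lemma onenorm_le_of_comp {j : X → Y} (hj : Function.Injective j) {c : Y →₀ ℝ} {d : X →₀ ℝ}
    (h : ∀ x, d x = c (j x)) : onenorm d ≤ onenorm c := by
  classical
  have : onenorm d = ∑ y ∈ d.support.image j, |c y| := by
    rw [Finset.sum_image (fun x _ x' _ hx => hj hx)]
    exact Finset.sum_congr rfl fun x _ => by rw [h]
  rw [this]
  refine Finset.sum_le_sum_of_subset_of_nonneg ?_ (fun _ _ _ => abs_nonneg _)
  intro y hy
  rcases Finset.mem_image.1 hy with ⟨x, hx, rfl⟩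
  rw [Finsupp.mem_support_iff] at hx ⊢
  rwa [← h]

lemma onenorm_equivMapDomain (e : X ≃ Y) (a : X →₀ ℝ) :
    onenorm (Finsupp.equivMapDomain e a) = onenorm a := by
  refine le_antisymm ?_ ?_
  · exact onenorm_le_of_comp e.symm.injective fun y => by simp
  · refine onenorm_le_of_comp e.injective fun x => ?_
    simp


lemma onenorm_of_nonneg {a : X →₀ ℝ} (ha : ∀ x, 0 ≤ a x) :
    onenorm a = a.sum fun _ r => r :=
  Finset.sum_congr rfl fun x _ => abs_of_nonneg (ha x)

lemma mapDomain_sub' {hmap : X → Y} (a b : X →₀ ℝ) :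
    Finsupp.mapDomain hmap (a - b) = Finsupp.mapDomain hmap a - Finsupp.mapDomain hmap b :=
  map_sub (Finsupp.lmapDomain ℝ ℝ hmap) a b



section Partition
variable [MeasurableSpace X] {Ps : Set (Set X)}

lemma exists_piece (hPs : IsCtblMeasPartition Ps) (x : X) : ∃ P ∈ Ps, x ∈ P := by
  have : x ∈ ⋃₀ Ps := hPs.2.2.2.symm ▸ Set.mem_univ x
  exact this

noncomputable def piece (hPs : IsCtblMeasPartition Ps) (x : X) : ↥Ps :=
  ⟨(exists_piece hPs x).choose, (exists_piece hPs x).choose_spec.1⟩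

lemma mem_piece (hPs : IsCtblMeasPartition Ps) (x : X) : x ∈ (piece hPs x : Set X) :=
  (exists_piece hPs x).choose_spec.2

lemma piece_eq (hPs : IsCtblMeasPartition Ps) {P : Set X} (hP : P ∈ Ps) {x : X} (hx : x ∈ P) :
    (piece hPs x : Set X) = P := by
  by_contra hne
  have hdisj := hPs.2.2.1 hP (piece hPs x).2 (fun h => hne h.symm)
  exact Set.disjoint_left.1 hdisj hx (mem_piece hPs x)

lemma piece_eq' (hPs : IsCtblMeasPartition Ps) {P : ↥Ps} {x : X} (hx : x ∈ (P : Set X)) :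
    piece hPs x = P :=
  Subtype.ext (piece_eq hPs P.2 hx)

lemma pnorm_eq (hPs : IsCtblMeasPartition Ps) (b : X →₀ ℝ) :
    pnorm Ps b = onenorm (Finsupp.mapDomain (piece hPs) b) := by
  classical
  set m := Finsupp.mapDomain (piece hPs) b with hm
  have hcoord : ∀ P : ↥Ps,
      (∑ x ∈ b.support, (P : Set X).indicator (fun y => b y) x) = m P := by
    intro P
    rw [hm, Finsupp.mapDomain, Finsupp.sum_apply]
    rw [Finsupp.sum]
    refine Finset.sum_congr rfl fun x _ => ?_
    rw [Finsupp.single_apply, Set.indicator_apply]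
    by_cases hx : x ∈ (P : Set X)
    · rw [if_pos hx, if_pos (piece_eq' hPs hx)]
    · rw [if_neg hx, if_neg]
      intro h
      exact hx (h ▸ mem_piece hPs x)
  unfold pnorm
  have : ∀ P : ↥Ps, |∑ x ∈ b.support, (P : Set X).indicator (fun y => b y) x| = |m P| :=
    fun P => by rw [hcoord P]
  calc (∑' P : ↥Ps, |∑ x ∈ b.support, (P : Set X).indicator (fun y => b y) x|)
      = ∑' P : ↥Ps, |m P| := tsum_congr this
    _ = ∑ P ∈ m.support, |m P| := by
        refine tsum_eq_sum fun P hP => ?_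
        rw [notMem_support_iff.1 hP, abs_zero]
    _ = onenorm m := rfl

lemma pnorm_neg (hPs : IsCtblMeasPartition Ps) (b : X →₀ ℝ) : pnorm Ps (-b) = pnorm Ps b := by
  rw [pnorm_eq hPs, pnorm_eq hPs]
  rw [show (-b) = (-1 : ℝ) • b by simp, Finsupp.mapDomain_smul]
  rw [show (-1 : ℝ) • Finsupp.mapDomain (piece hPs) b = -(Finsupp.mapDomain (piece hPs) b) by simp]
  exact onenorm_neg _

lemma measurable_comp_piece (hPs : IsCtblMeasPartition Ps) (k : ↥Ps → ℝ) :
    Measurable fun x => k (piece hPs x) := by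
  intro t _
  have : (fun x => k (piece hPs x)) ⁻¹' t = ⋃ P ∈ {P : ↥Ps | k P ∈ t}, (P : Set X) := by
    ext x
    simp only [Set.mem_preimage, Set.mem_iUnion, Set.mem_setOf_eq]
    constructor
    · intro h
      exact ⟨piece hPs x, h, mem_piece hPs x⟩
    · rintro ⟨P, hP, hxP⟩
      rwa [piece_eq' hPs hxP]
  rw [this]
  have hctbl : Countable ↥Ps := hPs.1.to_subtype
  exact MeasurableSet.biUnion (Set.to_countable _) fun P _ => hPs.2.1 P P.2

lemma pnorm_le_of_refines {Qs : Set (Set X)} (hPs : IsCtblMeasPartition Ps)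
    (hQs : IsCtblMeasPartition Qs)
    (href : ∀ Q ∈ Qs, ∃ P ∈ Ps, Q ⊆ P) (b : X →₀ ℝ) :
    pnorm Ps b ≤ pnorm Qs b := by
  classical
  rcases isEmpty_or_nonempty X with hX | hX
  · have hb : b = 0 := by ext x; exact isEmptyElim x
    subst hb
    simp [pnorm]
  · obtain ⟨x₀⟩ := hX
    haveI : Nonempty ↥Ps := ⟨piece hPs x₀⟩
    set ρ : ↥Qs → ↥Ps := fun Q =>
      ⟨(href Q Q.2).choose, (href Q Q.2).choose_spec.1⟩ with hρ
    have hkey : ∀ x, piece hPs x = ρ (piece hQs x) := by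
      intro x
      have hx : x ∈ ((piece hQs x : Set X)) := mem_piece hQs x
      have hsub := (href (piece hQs x) (piece hQs x).2).choose_spec.2
      exact piece_eq' hPs (hsub hx)
    calc pnorm Ps b = onenorm (Finsupp.mapDomain (piece hPs) b) := pnorm_eq hPs b
      _ = onenorm (Finsupp.mapDomain (ρ ∘ piece hQs) b) := by
          rw [show piece hPs = ρ ∘ piece hQs from funext hkey]
      _ = onenorm (Finsupp.mapDomain ρ (Finsupp.mapDomain (piece hQs) b)) := by
          rw [Finsupp.mapDomain_comp]
      _ ≤ onenorm (Finsupp.mapDomain (piece hQs) b) := onenorm_mapDomain_le _ _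
      _ = pnorm Qs b := (pnorm_eq hQs b).symm

lemma meet_partition {Qs : Set (Set X)} (hPs : IsCtblMeasPartition Ps)
    (hQs : IsCtblMeasPartition Qs) :
    IsCtblMeasPartition {R | ∃ P ∈ Ps, ∃ Q ∈ Qs, R = P ∩ Q ∧ R.Nonempty} := by
  constructor
  · refine Set.Countable.mono ?_ ((hPs.1.prod hQs.1).image fun pq => pq.1 ∩ pq.2)
    rintro R ⟨P, hP, Q, hQ, rfl, -⟩
    exact ⟨(P, Q), ⟨hP, hQ⟩, rfl⟩
  refine ⟨?_, ?_, ?_⟩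
  · rintro R ⟨P, hP, Q, hQ, rfl, -⟩
    exact (hPs.2.1 P hP).inter (hQs.2.1 Q hQ)
  · rintro R₁ h₁ R₂ h₂ hne
    obtain ⟨P₁, hP₁, Q₁, hQ₁, rfl, -⟩ := h₁
    obtain ⟨P₂, hP₂, Q₂, hQ₂, rfl, -⟩ := h₂
    rw [Function.onFun, Set.disjoint_left]
    rintro x ⟨hxP₁, hxQ₁⟩ ⟨hxP₂, hxQ₂⟩
    refine hne ?_
    have hP : P₁ = P₂ := by
      rw [← piece_eq hPs hP₁ hxP₁, ← piece_eq hPs hP₂ hxP₂]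
    have hQ : Q₁ = Q₂ := by
      rw [← piece_eq hQs hQ₁ hxQ₁, ← piece_eq hQs hQ₂ hxQ₂]
    rw [hP, hQ]
  · apply Set.eq_univ_of_forall
    intro x
    refine Set.mem_sUnion.2 ⟨(piece hPs x : Set X) ∩ (piece hQs x : Set X), ?_, ?_⟩
    · exact ⟨_, (piece hPs x).2, _, (piece hQs x).2, rfl, ⟨x, mem_piece hPs x, mem_piece hQs x⟩⟩
    · exact ⟨mem_piece hPs x, mem_piece hQs x⟩

end Partition

lemma trivial_partition [MeasurableSpace X] : IsCtblMeasPartition (X := X) {Set.univ} := by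
  refine ⟨Set.countable_singleton _, ?_, Set.pairwiseDisjoint_singleton _ _, by simp⟩
  intro P hP
  rw [Set.mem_singleton_iff] at hP
  subst hP
  exact MeasurableSet.univ

/-- weighted sum `Σ a x * f x`. -/
def wsum (f : X → ℝ) (a : X →₀ ℝ) : ℝ := a.sum fun x c => c * f x


lemma wsum_sub (f : X → ℝ) (a b : X →₀ ℝ) : wsum f (a - b) = wsum f a - wsum f b := by
  unfold wsum
  exact Finsupp.sum_sub_index fun x b₁ b₂ => sub_mul _ _ _

lemma abs_wsum_le {f : X → ℝ} {C : ℝ} (hC : ∀ x, |f x| ≤ C) (a : X →₀ ℝ) :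
    |wsum f a| ≤ C * onenorm a := by
  unfold wsum Finsupp.sum
  calc |∑ x ∈ a.support, a x * f x| ≤ ∑ x ∈ a.support, |a x * f x| :=
        Finset.abs_sum_le_sum_abs _ _
    _ ≤ ∑ x ∈ a.support, C * |a x| := by
        refine Finset.sum_le_sum fun x _ => ?_
        rw [abs_mul, mul_comm]
        exact mul_le_mul_of_nonneg_right (hC x) (abs_nonneg _)
    _ = C * onenorm a := by rw [← Finset.mul_sum]; rfl

lemma wsum_nonneg {f : X → ℝ} (hf : ∀ x, 0 ≤ f x) {a : X →₀ ℝ} (ha : ∀ x, 0 ≤ a x) :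
    0 ≤ wsum f a :=
  Finset.sum_nonneg fun x _ => mul_nonneg (ha x) (hf x)

lemma wsum_one {a : X →₀ ℝ} (ha : ∀ x, 0 ≤ a x) : wsum (fun _ => (1:ℝ)) a = onenorm a := by
  unfold wsum Finsupp.sum onenorm
  exact Finset.sum_congr rfl fun x _ => by
    simp only [mul_one]
    rw [abs_of_nonneg (ha x)]

lemma wsum_add (f g : X → ℝ) (a : X →₀ ℝ) :
    wsum (fun x => f x + g x) a = wsum f a + wsum g a := by
  unfold wsum Finsupp.sum
  rw [← Finset.sum_add_distrib]
  exact Finset.sum_congr rfl fun x _ => mul_add _ _ _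

lemma wsum_smul (c : ℝ) (f : X → ℝ) (a : X →₀ ℝ) :
    wsum (fun x => c * f x) a = c * wsum f a := by
  unfold wsum Finsupp.sum
  rw [Finset.mul_sum]
  exact Finset.sum_congr rfl fun x _ => by ring

lemma wsum_fsAct [Group G] [MulAction G X] (g : G) (f : X → ℝ) (a : X →₀ ℝ) :
    wsum f (fsAct g a) = wsum (fun x => f (g • x)) a := by
  unfold wsum fsAct
  rw [Finsupp.equivMapDomain_eq_mapDomain, Finsupp.sum_mapDomain_index]
  · rfl
  · intro b; simp
  · intro b m₁ m₂; rw [add_mul]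

lemma onenorm_fsAct [Group G] [MulAction G X] (g : G) (a : X →₀ ℝ) :
    onenorm (fsAct g a) = onenorm a :=
  onenorm_equivMapDomain _ _

lemma fsAct_eq_mapDomain [Group G] [MulAction G X] (g : G) (a : X →₀ ℝ) :
    fsAct g a = Finsupp.mapDomain (fun x => g • x) a := by
  unfold fsAct
  rw [Finsupp.equivMapDomain_eq_mapDomain]
  rfl

section Est
variable [MeasurableSpace X]

/-- The level-set partition of a bounded measurable function, with the key estimate. -/
lemma exists_partition_estimate {f : X → ℝ} (hf : Measurable f) {C : ℝ} (hC0 : 0 ≤ C)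
    (hC : ∀ x, |f x| ≤ C) {δ : ℝ} (hδ : 0 < δ) :
    ∃ Qs : Set (Set X), IsCtblMeasPartition Qs ∧
      ∀ b : X →₀ ℝ, |wsum f b| ≤ C * pnorm Qs b + δ * onenorm b := by
  classical
  set I : ℤ → Set ℝ := fun k => Set.Ico (k * δ) ((k + 1) * δ) with hI
  set Qs : Set (Set X) := Set.range (fun k : ℤ => f ⁻¹' I k) with hQs
  have hmemI : ∀ (x : X) (k : ℤ), x ∈ f ⁻¹' I k ↔ (k : ℝ) * δ ≤ f x ∧ f x < (k + 1) * δ :=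
    fun x k => Iff.rfl
  have hkey : ∀ (k₁ k₂ : ℤ) (x : X), x ∈ f ⁻¹' I k₁ → x ∈ f ⁻¹' I k₂ → k₁ = k₂ := by
    intro k₁ k₂ x h₁ h₂
    by_contra hne
    rcases lt_or_gt_of_ne hne with h | h
    · have : ((k₁:ℝ) + 1) * δ ≤ (k₂:ℝ) * δ := by
        have : (k₁:ℝ) + 1 ≤ (k₂:ℝ) := by exact_mod_cast h
        nlinarith
      have := h₁.2
      have := h₂.1
      linarith
    · have : ((k₂:ℝ) + 1) * δ ≤ (k₁:ℝ) * δ := by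
        have : (k₂:ℝ) + 1 ≤ (k₁:ℝ) := by exact_mod_cast h
        nlinarith
      have := h₂.2
      have := h₁.1
      linarith
  have hpart : IsCtblMeasPartition Qs := by
    refine ⟨Set.countable_range _, ?_, ?_, ?_⟩
    · rintro P ⟨k, rfl⟩
      exact hf measurableSet_Ico
    · rintro P ⟨k₁, rfl⟩ Q ⟨k₂, rfl⟩ hne
      rw [Function.onFun, Set.disjoint_left]
      intro x hx₁ hx₂
      exact hne (by rw [hkey k₁ k₂ x hx₁ hx₂])
    · apply Set.eq_univ_of_forall
      intro x
      refine Set.mem_sUnion.2 ⟨f ⁻¹' I ⌊f x / δ⌋, ⟨⌊f x / δ⌋, rfl⟩, ?_⟩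
      rw [hmemI]
      constructor
      · rw [← le_div_iff₀ hδ]
        exact Int.floor_le _
      · rw [← div_lt_iff₀ hδ]
        exact Int.lt_floor_add_one _
  refine ⟨Qs, hpart, ?_⟩
  -- the value function
  set c : ↥Qs → ℝ := fun P => if h : (P : Set X).Nonempty then f h.choose else 0 with hc
  have hcbound : ∀ P : ↥Qs, |c P| ≤ C := by
    intro P
    show |if h : (P : Set X).Nonempty then f h.choose else 0| ≤ C
    split
    · exact hC _
    · simpa using hC0
  have hcnear : ∀ x : X, |f x - c (piece hpart x)| ≤ δ := by
    intro x
    have hxP : x ∈ (piece hpart x : Set X) := mem_piece hpart x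
    have hne : ((piece hpart x : Set X)).Nonempty := ⟨x, hxP⟩
    rw [hc]
    simp only [dif_pos hne]
    obtain ⟨k, hk⟩ := (piece hpart x).2
    have hk' : f ⁻¹' I k = (piece hpart x : Set X) := hk
    have hx : x ∈ f ⁻¹' I k := by rw [hk']; exact hxP
    have hx₀ : hne.choose ∈ f ⁻¹' I k := by rw [hk']; exact hne.choose_spec
    rw [hmemI] at hx hx₀
    rw [abs_le]
    constructor <;> nlinarith [hx.1, hx.2, hx₀.1, hx₀.2]
  intro b
  have hsplit : wsum f b = wsum (fun x => c (piece hpart x)) b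
      + wsum (fun x => f x - c (piece hpart x)) b := by
    rw [← wsum_add]
    unfold wsum
    refine Finset.sum_congr rfl fun x _ => by ring
  have h1 : |wsum (fun x => c (piece hpart x)) b| ≤ C * pnorm Qs b := by
    have : wsum (fun x => c (piece hpart x)) b
        = (Finsupp.mapDomain (piece hpart) b).sum fun P r => r * c P := by
      unfold wsum
      rw [Finsupp.sum_mapDomain_index]
      · intro P; simp
      · intro P m₁ m₂; rw [add_mul]
    rw [this, pnorm_eq hpart]
    set m := Finsupp.mapDomain (piece hpart) b
    calc |m.sum fun P r => r * c P| ≤ ∑ P ∈ m.support, |m P * c P| :=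
          Finset.abs_sum_le_sum_abs _ _
      _ ≤ ∑ P ∈ m.support, C * |m P| := by
          refine Finset.sum_le_sum fun P _ => ?_
          rw [abs_mul, mul_comm]
          exact mul_le_mul_of_nonneg_right (hcbound P) (abs_nonneg _)
      _ = C * onenorm m := by rw [← Finset.mul_sum]; rfl
  have h2 : |wsum (fun x => f x - c (piece hpart x)) b| ≤ δ * onenorm b :=
    abs_wsum_le hcnear b
  calc |wsum f b| ≤ |wsum (fun x => c (piece hpart x)) b|
        + |wsum (fun x => f x - c (piece hpart x)) b| := by
        rw [hsplit]; exact abs_add_le _ _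
    _ ≤ C * pnorm Qs b + δ * onenorm b := add_le_add h1 h2

end Est

lemma memℓp_finsupp (c : ι →₀ ℝ) : Memℓp (fun i => c i) 1 := by
  apply memℓp_gen
  have : ∀ i ∉ c.support, ‖c i‖ ^ (1 : ℝ≥0∞).toReal = 0 := by
    intro i hi
    rw [Finsupp.notMem_support_iff.1 hi]
    simp
  exact summable_of_ne_finset_zero this

noncomputable def toLpF : (ι →₀ ℝ) →ₗ[ℝ] lp (fun _ : ι => ℝ) 1 where
  toFun c := ⟨fun i => c i, memℓp_finsupp c⟩
  map_add' a b := by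
    ext i
    simp [lp.coeFn_add]
    rfl
  map_smul' r a := by
    ext i
    simp [lp.coeFn_smul]

@[simp] lemma toLpF_apply (c : ι →₀ ℝ) (i : ι) : (toLpF c : ∀ _ : ι, ℝ) i = c i := rfl

lemma norm_toLpF (c : ι →₀ ℝ) : ‖toLpF c‖ = onenorm c := by
  have h1 : (0:ℝ) < (1 : ℝ≥0∞).toReal := by simp
  rw [lp.norm_eq_tsum_rpow h1]
  simp only [ENNReal.toReal_one, Real.rpow_one, toLpF_apply]
  rw [one_div_one, Real.rpow_one]
  have : (∑' i, ‖c i‖) = ∑ i ∈ c.support, ‖c i‖ := by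
    refine tsum_eq_sum fun i hi => ?_
    rw [Finsupp.notMem_support_iff.1 hi, norm_zero]
  rw [this]
  rfl



section BM
variable [MeasurableSpace X]

lemma isBddMeas_const (c : ℝ) : IsBddMeas (fun _ : X => c) :=
  ⟨⟨|c|, fun _ => le_refl _⟩, measurable_const⟩

lemma bm_add {f g : X → ℝ} (hf : IsBddMeas f) (hg : IsBddMeas g) :
    IsBddMeas (fun x => f x + g x) := by
  obtain ⟨⟨Cf, hCf⟩, hfm⟩ := hf
  obtain ⟨⟨Cg, hCg⟩, hgm⟩ := hg
  exact ⟨⟨Cf + Cg, fun x => (abs_add_le _ _).trans (add_le_add (hCf x) (hCg x))⟩, hfm.add hgm⟩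

lemma bm_const_mul {f : X → ℝ} (hf : IsBddMeas f) (c : ℝ) :
    IsBddMeas (fun x => c * f x) := by
  obtain ⟨⟨Cf, hCf⟩, hfm⟩ := hf
  refine ⟨⟨|c| * Cf, fun x => ?_⟩, hfm.const_mul c⟩
  rw [abs_mul]
  exact mul_le_mul_of_nonneg_left (hCf x) (abs_nonneg c)

lemma bm_sub {f g : X → ℝ} (hf : IsBddMeas f) (hg : IsBddMeas g) :
    IsBddMeas (fun x => f x - g x) := by
  obtain ⟨⟨Cf, hCf⟩, hfm⟩ := hf
  obtain ⟨⟨Cg, hCg⟩, hgm⟩ := hg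
  exact ⟨⟨Cf + Cg, fun x => (abs_sub _ _).trans (add_le_add (hCf x) (hCg x))⟩, hfm.sub hgm⟩

lemma isBddMeas_sum {κ : Type*} (s : Finset κ) (k : κ → X → ℝ)
    (h : ∀ i ∈ s, IsBddMeas (k i)) : IsBddMeas (fun x => ∑ i ∈ s, k i x) := by
  classical
  induction s using Finset.induction_on with
  | empty => simpa using isBddMeas_const 0
  | insert i s' hnot ih =>
      have h1 : IsBddMeas (k i) := h i (Finset.mem_insert_self i s')
      have h2 : IsBddMeas (fun x => ∑ j ∈ s', k j x) :=
        ih fun j hj => h j (Finset.mem_insert_of_mem hj)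
      have := bm_add h1 h2
      convert this using 1
      funext x
      rw [Finset.sum_insert hnot]
end BM

theorem mean_to_reiter {G X : Type*} [Group G] [MeasurableSpace X] [MulAction G X]
    (hmeas : ∀ g : G, Measurable (fun x : X => g • x))
    (hμex : ∃ μ : (X → ℝ) → ℝ, IsMean IsBddMeas μ ∧
        ∀ (g : G) (f : X → ℝ), IsBddMeas f → μ (fun x => f (g • x)) = μ f)
    (Ps : Set (Set X)) (hPs : IsCtblMeasPartition Ps) (E : Finset G) (ε : ℝ) (hε : 0 < ε) :
    ∃ a : X →₀ ℝ, (∀ x, 0 ≤ a x) ∧ onenorm a = 1 ∧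
      ∀ g ∈ E, pnorm Ps (a - fsAct g a) ≤ ε := by
  classical
  obtain ⟨μ, ⟨hone, hpos, hadd, hsmul⟩, hinv⟩ := hμex
  -- μ basics
  have hμzero : μ (fun _ => (0:ℝ)) = 0 := by
    have h0 := hsmul 0 (fun _ => (0:ℝ)) (isBddMeas_const 0)
    have he : (fun x : X => (0:ℝ) * (fun _ : X => (0:ℝ)) x) = (fun _ : X => (0:ℝ)) := by
      funext x; ring
    rw [he] at h0
    rw [h0, zero_mul]
  have hμconst : ∀ c : ℝ, μ (fun _ => c) = c := by
    intro c
    have h0 := hsmul c (fun _ => (1:ℝ)) (isBddMeas_const 1)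
    have he : (fun x : X => c * (fun _ : X => (1:ℝ)) x) = (fun _ : X => c) := by
      funext x; ring
    rw [he] at h0
    rw [h0, hone, mul_one]
  have hμsub : ∀ f₁ f₂ : X → ℝ, IsBddMeas f₁ → IsBddMeas f₂ →
      μ (fun x => f₁ x - f₂ x) = μ f₁ - μ f₂ := by
    intro f₁ f₂ h₁ h₂
    have hneg := hsmul (-1) f₂ h₂
    have hs := hadd f₁ (fun x => (-1) * f₂ x) h₁ (bm_const_mul h₂ (-1))
    have he : (fun x => f₁ x + (fun x => (-1) * f₂ x) x) = (fun x => f₁ x - f₂ x) := by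
      funext x; ring
    rw [he] at hs
    rw [hs, hneg]
    ring
  have hμsum : ∀ (s : Finset {g // g ∈ E}) (k : {g // g ∈ E} → X → ℝ),
      (∀ i ∈ s, IsBddMeas (k i)) → μ (fun x => ∑ i ∈ s, k i x) = ∑ i ∈ s, μ (k i) := by
    intro s k h
    induction s using Finset.induction_on with
    | empty => simpa using hμzero
    | insert i s' hnot ih =>
        have h1 : IsBddMeas (k i) := h i (Finset.mem_insert_self i s')
        have h2 : IsBddMeas (fun x => ∑ j ∈ s', k j x) :=
          isBddMeas_sum s' k fun j hj => h j (Finset.mem_insert_of_mem hj)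
        have hs := hadd (k i) (fun x => ∑ j ∈ s', k j x) h1 h2
        have he : (fun x => (k i) x + (fun x => ∑ j ∈ s', k j x) x)
            = (fun x => ∑ j ∈ insert i s', k j x) := by
          funext x
          rw [Finset.sum_insert hnot]
        rw [he] at hs
        rw [hs, Finset.sum_insert hnot, ih (fun j hj => h j (Finset.mem_insert_of_mem hj))]
  have hμge : ∀ (f : X → ℝ) (c : ℝ), IsBddMeas f → (∀ x, c ≤ f x) → c ≤ μ f := by
    intro f c hf hc
    have hsub := hμsub f (fun _ => c) hf (isBddMeas_const c)
    have hp := hpos (fun x => f x - (fun _ : X => c) x) (bm_sub hf (isBddMeas_const c))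
      (fun x => by simpa using sub_nonneg.2 (hc x))
    rw [hsub, hμconst] at hp
    linarith
  -- main argument
  by_contra hcon
  push_neg at hcon
  -- hcon : ∀ a, nonneg → norm one → ∃ g ∈ E, ε < pnorm
  haveI : Fact ((1:ℝ≥0∞) ≤ 1) := ⟨le_rfl⟩
  set ι : Type _ := ({g // g ∈ E} × ↥Ps) with hι
  set K : Set (X →₀ ℝ) := {a | (∀ x, 0 ≤ a x) ∧ onenorm a = 1} with hK
  set blk : {g // g ∈ E} → (X →₀ ℝ) →ₗ[ℝ] (↥Ps →₀ ℝ) := fun g =>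
    (Finsupp.lmapDomain ℝ ℝ (piece hPs)).comp
      (LinearMap.id - Finsupp.lmapDomain ℝ ℝ (fun x : X => (g : G) • x)) with hblkdef
  set bigc : (X →₀ ℝ) →ₗ[ℝ] (ι →₀ ℝ) :=
    ∑ g : {g // g ∈ E}, (Finsupp.lmapDomain ℝ ℝ (fun P : ↥Ps => ((g, P) : ι))).comp (blk g)
    with hbigcdef
  set Φ : (X →₀ ℝ) →ₗ[ℝ] lp (fun _ : ι => ℝ) 1 := toLpF.comp bigc with hΦdef
  have hblk : ∀ (g : {g // g ∈ E}) (a : X →₀ ℝ),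
      blk g a = Finsupp.mapDomain (piece hPs) (a - fsAct (g : G) a) := by
    intro g a
    rw [hblkdef]
    simp only [LinearMap.comp_apply, LinearMap.sub_apply, LinearMap.id_apply,
      Finsupp.lmapDomain_apply]
    rw [fsAct_eq_mapDomain]
  have hinj : ∀ g : {g // g ∈ E}, Function.Injective (fun P : ↥Ps => ((g, P) : ι)) := by
    intro g P₁ P₂ h
    exact congrArg Prod.snd h
  have hbigc_coord : ∀ (a : X →₀ ℝ) (g : {g // g ∈ E}) (P : ↥Ps),
      bigc a (g, P) = blk g a P := by
    intro a g P
    rw [hbigcdef, LinearMap.sum_apply, Finsupp.finset_sum_apply]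
    rw [Finset.sum_eq_single g]
    · rw [LinearMap.comp_apply, Finsupp.lmapDomain_apply,
        Finsupp.mapDomain_apply (hinj g)]
    · intro g' _ hne
      rw [LinearMap.comp_apply, Finsupp.lmapDomain_apply]
      refine Finsupp.mapDomain_notin_range _ _ ?_
      rintro ⟨P', hP'⟩
      exact hne (congrArg Prod.fst hP')
    · intro hg
      exact absurd (Finset.mem_univ g) hg
  have hnormΦ : ∀ a ∈ K, ε ≤ ‖Φ a‖ := by
    intro a ha
    obtain ⟨g, hg, hlt⟩ := hcon a ha.1 ha.2
    have h1 : pnorm Ps (a - fsAct g a) = onenorm (blk ⟨g, hg⟩ a) := by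
      rw [pnorm_eq hPs, hblk]
    have h2 : onenorm (blk ⟨g, hg⟩ a) ≤ onenorm (bigc a) :=
      onenorm_le_of_comp (hinj ⟨g, hg⟩) fun P => (hbigc_coord a ⟨g, hg⟩ P).symm
    have h3 : ‖Φ a‖ = onenorm (bigc a) := norm_toLpF _
    rw [h3]
    rw [h1] at hlt
    linarith
  have hKconv : Convex ℝ K := by
    rintro a ⟨ha0, ha1⟩ b ⟨hb0, hb1⟩ s t hs ht hst
    have hnn : ∀ x, 0 ≤ (s • a + t • b) x := by
      intro x
      simp only [Finsupp.coe_add, Finsupp.coe_smul, Pi.add_apply, Pi.smul_apply,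
        smul_eq_mul]
      have := ha0 x; have := hb0 x
      nlinarith
    refine ⟨hnn, ?_⟩
    rw [onenorm_of_nonneg hnn]
    rw [Finsupp.sum_add_index' (fun _ => rfl) (fun _ b₁ b₂ => rfl)]
    rw [Finsupp.sum_smul_index (fun _ => rfl), Finsupp.sum_smul_index (fun _ => rfl)]
    have ea : (a.sum fun _ c => s * c) = s * a.sum fun _ c => c := by
      rw [Finsupp.mul_sum]
    have eb : (b.sum fun _ c => t * c) = t * b.sum fun _ c => c := by
      rw [Finsupp.mul_sum]
    rw [ea, eb, ← onenorm_of_nonneg ha0, ← onenorm_of_nonneg hb0, ha1, hb1]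
    simpa using hst
  set S : Set (lp (fun _ : ι => ℝ) 1) := Φ '' K with hS
  have hSconv : Convex ℝ S := hKconv.linear_image Φ
  have hS0 : (0 : lp (fun _ : ι => ℝ) 1) ∉ closure S := by
    intro h0
    have hsub : S ⊆ {y | ε ≤ ‖y‖} := by
      rintro y ⟨a, ha, rfl⟩
      exact hnormΦ a ha
    have hcl : IsClosed {y : lp (fun _ : ι => ℝ) 1 | ε ≤ ‖y‖} :=
      isClosed_le continuous_const continuous_norm
    have := closure_minimal hsub hcl h0
    simp only [Set.mem_setOf_eq, norm_zero] at this
    linarith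
  obtain ⟨f, u, hfu, hub⟩ :=
    geometric_hahn_banach_point_closed hSconv.closure isClosed_closure hS0
  have hu : 0 < u := by simpa using hfu
  set h : ι → ℝ := fun i => f (toLpF (Finsupp.single i 1)) with hh
  have hhb : ∀ i, |h i| ≤ ‖f‖ := by
    intro i
    have := f.le_opNorm (toLpF (Finsupp.single i 1))
    rw [norm_toLpF, onenorm_single] at this
    simpa using this
  set H : {g // g ∈ E} → X → ℝ := fun g x => h (g, piece hPs x) with hH
  have hHbm : ∀ g, IsBddMeas (H g) := by
    intro g
    exact ⟨⟨‖f‖, fun x => hhb _⟩, measurable_comp_piece hPs (fun P => h (g, P))⟩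
  set Fn : X → ℝ := fun x => ∑ g : {g // g ∈ E}, (H g x - H g ((g : G) • x)) with hFn
  have hcomp : ∀ g : {g // g ∈ E}, IsBddMeas (fun x => H g ((g : G) • x)) := by
    intro g
    exact ⟨⟨‖f‖, fun x => hhb _⟩, (measurable_comp_piece hPs (fun P => h (g, P))).comp
      (hmeas (g : G))⟩
  have hFnbm : IsBddMeas Fn :=
    isBddMeas_sum _ _ fun g _ => bm_sub (hHbm g) (hcomp g)
  -- key pointwise identity
  have hkey : ∀ x : X, Fn x = f (Φ (Finsupp.single x 1)) := by
    intro x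
    have hb1 : ∀ g : {g // g ∈ E}, blk g (Finsupp.single x 1)
        = Finsupp.single (piece hPs x) 1 - Finsupp.single (piece hPs ((g:G) • x)) 1 := by
      intro g
      rw [hblk]
      have : fsAct (g : G) (Finsupp.single x 1) = Finsupp.single ((g:G) • x) 1 := by
        rw [fsAct_eq_mapDomain, Finsupp.mapDomain_single]
      rw [this, mapDomain_sub', Finsupp.mapDomain_single, Finsupp.mapDomain_single]
    have hb2 : bigc (Finsupp.single x 1) = ∑ g : {g // g ∈ E},
        (Finsupp.single ((g, piece hPs x) : ι) 1
          - Finsupp.single ((g, piece hPs ((g:G) • x)) : ι) 1) := by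
      rw [hbigcdef, LinearMap.sum_apply]
      refine Finset.sum_congr rfl fun g _ => ?_
      rw [LinearMap.comp_apply, hb1 g, Finsupp.lmapDomain_apply]
      rw [mapDomain_sub', Finsupp.mapDomain_single, Finsupp.mapDomain_single]
    have : f (Φ (Finsupp.single x 1)) =
        ∑ g : {g // g ∈ E}, (h (g, piece hPs x) - h (g, piece hPs ((g:G) • x))) := by
      rw [hΦdef, LinearMap.comp_apply, hb2]
      set ψ : (ι →₀ ℝ) →ₗ[ℝ] ℝ := (f : lp (fun _ : ι => ℝ) 1 →L[ℝ] ℝ).toLinearMap.comp toLpF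
        with hψ
      have hψ1 : ∀ c : ι →₀ ℝ, f (toLpF c) = ψ c := fun c => rfl
      rw [hψ1, map_sum]
      refine Finset.sum_congr rfl fun g _ => ?_
      rw [map_sub]
      rfl
    rw [this, hFn]
  -- the contradiction
  have hptwise : ∀ x : X, u ≤ Fn x := by
    intro x
    have hmemK : Finsupp.single x 1 ∈ K := by
      refine ⟨fun y => ?_, by rw [onenorm_single]; norm_num⟩
      rw [Finsupp.single_apply]
      split <;> norm_num
    have := hub (Φ (Finsupp.single x 1)) (subset_closure ⟨_, hmemK, rfl⟩)
    rw [← hkey x] at this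
    linarith
  have hμFn0 : μ Fn = 0 := by
    rw [hFn, hμsum Finset.univ _ (fun g _ => bm_sub (hHbm g) (hcomp g))]
    refine Finset.sum_eq_zero fun g _ => ?_
    rw [hμsub _ _ (hHbm g) (hcomp g)]
    rw [hinv (g : G) (H g) (hHbm g)]
    ring
  have := hμge Fn u hFnbm hptwise
  rw [hμFn0] at this
  linarith



theorem reiter_to_mean {G X : Type*} [Group G] [MeasurableSpace X] [MulAction G X]
    (hR : ∀ Ps : Set (Set X), IsCtblMeasPartition Ps → ∀ E : Finset G, ∀ ε : ℝ, 0 < ε →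
        ∃ a : X →₀ ℝ, (∀ x, 0 ≤ a x) ∧ onenorm a = 1 ∧
          ∀ g ∈ E, pnorm Ps (a - fsAct g a) ≤ ε) :
    (∃ μ : (X → ℝ) → ℝ, IsMean IsBddMeas μ ∧
        ∀ (g : G) (f : X → ℝ), IsBddMeas f → μ (fun x => f (g • x)) = μ f) := by
  classical
  set K : Set (X →₀ ℝ) := {a | (∀ x, 0 ≤ a x) ∧ onenorm a = 1} with hK
  let Idx := {q : Set (Set X) × Finset G × ℝ // IsCtblMeasPartition q.1 ∧ 0 < q.2.2}
  let SS : Idx → Set (X →₀ ℝ) := fun q =>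
    {a ∈ K | ∀ g ∈ q.1.2.1, pnorm q.1.1 (a - fsAct g a) ≤ q.1.2.2}
  have hSSne : ∀ q : Idx, (SS q).Nonempty := by
    rintro ⟨⟨Ps, E, ε⟩, hPs, hε⟩
    obtain ⟨a, h1, h2, h3⟩ := hR Ps hPs E ε hε
    exact ⟨a, ⟨h1, h2⟩, h3⟩
  have hdir : Directed (· ≥ ·) fun q : Idx => Filter.principal (SS q) := by
    rintro ⟨⟨Ps₁, E₁, ε₁⟩, hPs₁, hε₁⟩ ⟨⟨Ps₂, E₂, ε₂⟩, hPs₂, hε₂⟩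
    set R : Set (Set X) := {R | ∃ P ∈ Ps₁, ∃ Q ∈ Ps₂, R = P ∩ Q ∧ R.Nonempty} with hRdef
    have hRp : IsCtblMeasPartition R := meet_partition hPs₁ hPs₂
    have href₁ : ∀ Q ∈ R, ∃ P ∈ Ps₁, Q ⊆ P := by
      rintro Q ⟨P, hP, Q', hQ', rfl, -⟩
      exact ⟨P, hP, Set.inter_subset_left⟩
    have href₂ : ∀ Q ∈ R, ∃ P ∈ Ps₂, Q ⊆ P := by
      rintro Q ⟨P, hP, Q', hQ', rfl, -⟩
      exact ⟨Q', hQ', Set.inter_subset_right⟩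
    refine ⟨⟨(R, E₁ ∪ E₂, min ε₁ ε₂), hRp, lt_min hε₁ hε₂⟩, ?_, ?_⟩ <;>
      · refine Filter.principal_mono.2 ?_
        rintro a ⟨haK, ha⟩
        refine ⟨haK, fun g hg => ?_⟩
        first
        | exact le_trans (le_trans (pnorm_le_of_refines hPs₁ hRp href₁ _)
            (ha g (Finset.mem_union_left _ hg))) (min_le_left _ _)
        | exact le_trans (le_trans (pnorm_le_of_refines hPs₂ hRp href₂ _)
            (ha g (Finset.mem_union_right _ hg))) (min_le_right _ _)
  let F : Filter (X →₀ ℝ) := ⨅ q : Idx, Filter.principal (SS q)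
  haveI hFne : F.NeBot := by
    refine Filter.iInf_neBot_of_directed hdir fun q => ?_
    rw [Filter.principal_neBot_iff]
    exact hSSne q
  let U : Ultrafilter (X →₀ ℝ) := Ultrafilter.of F
  have hU : (U : Filter (X →₀ ℝ)) ≤ F := Ultrafilter.of_le F
  have hmem : ∀ q : Idx, SS q ∈ U := fun q =>
    hU (Filter.mem_iInf_of_mem q (Filter.mem_principal_self _))
  have hKmem : K ∈ U := by
    have := hmem ⟨({Set.univ}, (∅ : Finset G), 1), trivial_partition, one_pos⟩
    refine Filter.mem_of_superset this ?_
    rintro a ⟨haK, -⟩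
    exact haK
  -- limit existence
  have hex : ∀ {f : X → ℝ}, (∃ C, ∀ x, |f x| ≤ C) →
      ∃ L, Filter.Tendsto (wsum f) (U : Filter (X →₀ ℝ)) (nhds L) := by
    rintro f ⟨C₀, hC₀⟩
    set C := max C₀ 0 with hC
    have hCb : ∀ x, |f x| ≤ C := fun x => le_trans (hC₀ x) (le_max_left _ _)
    have hev : ∀ᶠ a in (U : Filter (X →₀ ℝ)), wsum f a ∈ Set.Icc (-C) C := by
      refine Filter.mem_of_superset hKmem fun a ha => ?_
      have := abs_wsum_le hCb a
      rw [ha.2, mul_one] at this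
      show wsum f a ∈ Set.Icc (-C) C
      rw [Set.mem_Icc, ← abs_le]
      exact this
    have hle : (U.map (wsum f) : Filter ℝ) ≤ Filter.principal (Set.Icc (-C) C) := by
      rwa [Filter.le_principal_iff, ← Filter.eventually_mem_set]
    obtain ⟨L, -, hL⟩ := (isCompact_Icc (a := -C) (b := C)).ultrafilter_le_nhds
      (U.map (wsum f)) hle
    exact ⟨L, hL⟩
  set μ : (X → ℝ) → ℝ := fun f => Filter.limUnder (U : Filter (X →₀ ℝ)) (wsum f) with hμ
  have hμeq : ∀ {f : X → ℝ} {L : ℝ},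
      Filter.Tendsto (wsum f) (U : Filter (X →₀ ℝ)) (nhds L) → μ f = L := by
    intro f L h
    exact tendsto_nhds_unique (tendsto_nhds_limUnder ⟨L, h⟩) h
  refine ⟨μ, ⟨?_, ?_, ?_, ?_⟩, ?_⟩
  · -- μ 1 = 1
    refine hμeq (f := fun _ => (1:ℝ)) (L := 1) ?_
    refine Filter.Tendsto.congr' ?_ tendsto_const_nhds
    refine Filter.eventuallyEq_of_mem hKmem fun a ha => ?_
    rw [wsum_one ha.1, ha.2]
  · -- positivity
    rintro f ⟨hb, -⟩ hf
    obtain ⟨L, hL⟩ := hex hb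
    rw [hμeq hL]
    refine ge_of_tendsto hL ?_
    refine Filter.mem_of_superset hKmem fun a ha => ?_
    exact wsum_nonneg hf ha.1
  · -- additivity
    rintro f g ⟨hbf, -⟩ ⟨hbg, -⟩
    obtain ⟨Lf, hLf⟩ := hex hbf
    obtain ⟨Lg, hLg⟩ := hex hbg
    have : Filter.Tendsto (wsum fun x => f x + g x) (U : Filter (X →₀ ℝ)) (nhds (Lf + Lg)) := by
      have := hLf.add hLg
      refine Filter.Tendsto.congr (fun a => ?_) this
      rw [← wsum_add]
    rw [hμeq this, hμeq hLf, hμeq hLg]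
  · -- scalar
    rintro c f ⟨hbf, -⟩
    obtain ⟨Lf, hLf⟩ := hex hbf
    have : Filter.Tendsto (wsum fun x => c * f x) (U : Filter (X →₀ ℝ)) (nhds (c * Lf)) := by
      have := hLf.const_mul c
      refine Filter.Tendsto.congr (fun a => ?_) this
      rw [← wsum_smul]
    rw [hμeq this, hμeq hLf]
  · -- invariance
    rintro g f ⟨⟨C₀, hC₀⟩, hfm⟩
    obtain ⟨L, hL⟩ := hex ⟨C₀, hC₀⟩
    set C := max C₀ 0 with hC
    have hC0 : 0 ≤ C := le_max_right _ _
    have hCb : ∀ x, |f x| ≤ C := fun x => le_trans (hC₀ x) (le_max_left _ _)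
    have hdiff : Filter.Tendsto (fun a => wsum f (fsAct g a) - wsum f a)
        (U : Filter (X →₀ ℝ)) (nhds 0) := by
      rw [Metric.tendsto_nhds]
      intro η hη
      obtain ⟨Qs, hQs, hest⟩ := exists_partition_estimate hfm hC0 hCb
        (δ := η/4) (by linarith)
      have hε' : (0:ℝ) < η/(4*(C+1)) := by positivity
      have hmem' := hmem ⟨(Qs, {g}, η/(4*(C+1))), hQs, hε'⟩
      refine Filter.mem_of_superset hmem' fun a ha => ?_
      obtain ⟨haK, hag⟩ := ha
      have hpn : pnorm Qs (fsAct g a - a) ≤ η/(4*(C+1)) := by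
        have h1 := hag g (Finset.mem_singleton_self g)
        have h2 : fsAct g a - a = -(a - fsAct g a) := (neg_sub _ _).symm
        rw [h2, pnorm_neg hQs]
        exact h1
      have hon : onenorm (fsAct g a - a) ≤ 2 := by
        have h1 : fsAct g a - a = fsAct g a + (-a) := sub_eq_add_neg _ _
        rw [h1]
        have := onenorm_add_le (fsAct g a) (-a)
        rw [onenorm_neg, onenorm_fsAct, haK.2] at this
        linarith
      have hkey : |wsum f (fsAct g a - a)| ≤ C * (η/(4*(C+1))) + (η/4) * 2 := by
        refine le_trans (hest _) ?_
        have t1 : C * pnorm Qs (fsAct g a - a) ≤ C * (η/(4*(C+1))) :=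
          mul_le_mul_of_nonneg_left hpn hC0
        have t2 : η/4 * onenorm (fsAct g a - a) ≤ η/4 * 2 :=
          mul_le_mul_of_nonneg_left hon (by positivity)
        linarith
      show dist (wsum f (fsAct g a) - wsum f a) 0 < η
      rw [Real.dist_eq, sub_zero, ← wsum_sub]
      have hfrac : C * (η/(4*(C+1))) ≤ η/4 := by
        have e1 : C * (η / (4 * (C + 1))) = (C * η) / (4 * (C + 1)) := by ring
        rw [e1, div_le_div_iff₀ (by positivity) (by norm_num : (0:ℝ) < 4)]
        nlinarith
      calc |wsum f (fsAct g a - a)| ≤ C * (η/(4*(C+1))) + (η/4) * 2 := hkey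
        _ ≤ η/4 + η/2 := by linarith
        _ < η := by linarith
    have htend : Filter.Tendsto (wsum fun x => f (g • x)) (U : Filter (X →₀ ℝ)) (nhds L) := by
      have := hL.add hdiff
      rw [add_zero] at this
      refine Filter.Tendsto.congr (fun a => ?_) this
      rw [← wsum_fsAct]
      ring
    rw [hμeq htend, hμeq hL]


end InvMean

theorem invariant_mean_iff_reiter {G X : Type*} [Group G] [MeasurableSpace X] [MulAction G X]
    (hmeas : ∀ g : G, Measurable (fun x : X => g • x)) :
    (∃ μ : (X → ℝ) → ℝ, IsMean IsBddMeas μ ∧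
        ∀ (g : G) (f : X → ℝ), IsBddMeas f → μ (fun x => f (g • x)) = μ f) ↔
    (∀ Ps : Set (Set X), IsCtblMeasPartition Ps → ∀ E : Finset G, ∀ ε : ℝ, 0 < ε →
        ∃ a : X →₀ ℝ, (∀ x, 0 ≤ a x) ∧ onenorm a = 1 ∧
          ∀ g ∈ E, pnorm Ps (a - fsAct g a) ≤ ε) := by
  constructor
  · intro hμex Ps hPs E ε hε
    exact InvMean.mean_to_reiter hmeas hμex Ps hPs E ε hε
  · intro hR
    exact InvMean.reiter_to_mean hR
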